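/- Let F be a Turánable edge-ordered graph and let v ∈ V(F) be a vertex incident to the smallest edge of F. Let F′ be the edge-ordered graph obtained from F by adding a new vertex v′ and the edge vv′, placed smaller than all edges of F in the edge order. Then F′ is Turánable. -/

import Mathlib

/-- An *edge-ordered graph*: a simple graph together with a real labeling of
pairs of vertices that is injective on the edge set (hence inducing a linear
order of the edges). -/
structure EdgeOrderedGraph (V : Type*) where
  graph : SimpleGraph V
  label : Sym2 V → ℝ
  inj : ∀ e₁ ∈ graph.edgeSet, ∀ e₂ ∈ graph.edgeSet, label e₁ = label e₂ → e₁ = e₂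

namespace EdgeOrderedGraph

/-- `φ` realizes a copy of the edge-ordered graph `F` inside `G`. -/
def IsCopy {W V : Type*} (F : EdgeOrderedGraph W) (G : EdgeOrderedGraph V) (φ : W → V) : Prop :=
  Function.Injective φ ∧
    (∀ a b : W, F.graph.Adj a b → G.graph.Adj (φ a) (φ b)) ∧
    (∀ a b c d : W, F.graph.Adj a b → F.graph.Adj c d →
      F.label s(a, b) < F.label s(c, d) → G.label s(φ a, φ b) < G.label s(φ c, φ d))

/-- `G` contains a copy of `F`. -/
def ContainsCopy {W V : Type*} (G : EdgeOrderedGraph V) (F : EdgeOrderedGraph W) : Prop :=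
  ∃ φ : W → V, IsCopy F G φ

/-- `G` has a collection of vertex-disjoint copies of `F` covering exactly `S`. -/
def HasPerfectTilingOn {W V : Type*} (F : EdgeOrderedGraph W) (G : EdgeOrderedGraph V)
    (S : Set V) : Prop :=
  ∃ T : Set (W → V),
    (∀ φ ∈ T, IsCopy F G φ) ∧
    (∀ φ ∈ T, ∀ w : W, φ w ∈ S) ∧
    ∀ v ∈ S, ∃! p : (W → V) × W, p.1 ∈ T ∧ p.1 p.2 = v

/-- `G` has a perfect `F`-tiling. -/
def HasPerfectTiling {W V : Type*} (F : EdgeOrderedGraph W) (G : EdgeOrderedGraph V) : Prop :=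
  HasPerfectTilingOn F G Set.univ

/-- `F` is Turánable: some complete graph contains a copy of `F` under every edge-ordering. -/
def Turanable {W : Type*} (F : EdgeOrderedGraph W) : Prop :=
  ∃ t : ℕ, ∀ G : EdgeOrderedGraph (Fin t), G.graph = ⊤ → G.ContainsCopy F

/-- `F` is tileable: some complete graph `K_t` with `|F| ∣ t` has a perfect `F`-tiling
under every edge-ordering. -/
def Tileable {W : Type*} [Fintype W] (F : EdgeOrderedGraph W) : Prop :=
  ∃ t : ℕ, 0 < t ∧ Fintype.card W ∣ t ∧
    ∀ G : EdgeOrderedGraph (Fin t), G.graph = ⊤ → HasPerfectTiling F G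

/-- The degree of a vertex in an edge-ordered graph. -/
noncomputable def degree {V : Type*} (G : EdgeOrderedGraph V) (v : V) : ℕ :=
  (G.graph.neighborSet v).ncard

end EdgeOrderedGraph

open EdgeOrderedGraph

/-- The monotone path `P_k^≤` with `k` edges: consecutive edges increase. -/
noncomputable def monotonePath (k : ℕ) : EdgeOrderedGraph (Fin (k + 1)) where
  graph := SimpleGraph.fromRel (fun a b => a.val + 1 = b.val)
  label := Sym2.lift ⟨fun a b => ((min a.val b.val : ℕ) : ℝ), fun a b => by simp [min_comm]⟩
  inj := by
    intro e₁ h₁ e₂ h₂ heq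
    induction e₁ using Sym2.ind with
    | _ a b =>
    induction e₂ using Sym2.ind with
    | _ c d =>
    rw [SimpleGraph.mem_edgeSet, SimpleGraph.fromRel_adj] at h₁ h₂
    simp only [Sym2.lift_mk] at heq
    have hm : min a.val b.val = min c.val d.val := Nat.cast_injective heq
    have hab : a.val ≠ b.val := fun h => h₁.1 (Fin.val_injective h)
    have hcd : c.val ≠ d.val := fun h => h₂.1 (Fin.val_injective h)
    have key : (a.val = c.val ∧ b.val = d.val) ∨ (a.val = d.val ∧ b.val = c.val) := by
      have h12 := h₁.2; have h22 := h₂.2; omega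
    rw [Sym2.eq_iff]
    rcases key with ⟨x, y⟩ | ⟨x, y⟩
    · exact Or.inl ⟨Fin.val_injective x, Fin.val_injective y⟩
    · exact Or.inr ⟨Fin.val_injective x, Fin.val_injective y⟩

/-- Auxiliary: if every edge-ordering of `K_t` contains `F`, then inside any edge-ordered
complete graph on `Fin N`, every subset of size at least `t` contains a copy of `F`. -/
lemma exists_copy_in_subset {W : Type} (F : EdgeOrderedGraph W) {t N : ℕ}
    (htur : ∀ H : EdgeOrderedGraph (Fin t), H.graph = ⊤ → H.ContainsCopy F)
    (G : EdgeOrderedGraph (Fin N)) (hG : G.graph = ⊤)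
    (S : Finset (Fin N)) (hS : t ≤ S.card) :
    ∃ φ : W → Fin N, IsCopy F G φ ∧ ∀ w : W, φ w ∈ S := by
  classical
  have hcard : Fintype.card (Fin t) ≤ Fintype.card S := by
    simpa [Fintype.card_coe] using hS
  obtain ⟨e⟩ : Nonempty (Fin t ↪ S) := Function.Embedding.nonempty_of_card_le hcard
  set ι : Fin t → Fin N := fun i => (e i : Fin N) with hιdef
  have hinj : Function.Injective ι := fun a b h => e.injective (Subtype.ext h)
  have hmem : ∀ i, ι i ∈ S := fun i => (e i).2
  have hGedge : ∀ a b : Fin N, a ≠ b → s(a, b) ∈ G.graph.edgeSet := by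
    intro a b hab
    rw [SimpleGraph.mem_edgeSet, hG, SimpleGraph.top_adj]
    exact hab
  let H : EdgeOrderedGraph (Fin t) :=
    { graph := ⊤
      label := fun ee => G.label (ee.map ι)
      inj := by
        intro e₁ h₁ e₂ h₂ heq
        induction e₁ using Sym2.ind with
        | _ a b =>
        induction e₂ using Sym2.ind with
        | _ c d =>
        rw [SimpleGraph.mem_edgeSet, SimpleGraph.top_adj] at h₁ h₂
        simp only [Sym2.map_pair_eq] at heq
        have h3 := G.inj _ (hGedge _ _ fun h => h₁ (hinj h))
          _ (hGedge _ _ fun h => h₂ (hinj h)) heq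
        rw [Sym2.eq_iff] at h3 ⊢
        rcases h3 with ⟨h1, h2⟩ | ⟨h1, h2⟩
        · exact Or.inl ⟨hinj h1, hinj h2⟩
        · exact Or.inr ⟨hinj h1, hinj h2⟩ }
  obtain ⟨ψ, hinjψ, hadjψ, hordψ⟩ := htur H rfl
  refine ⟨ι ∘ ψ, ⟨hinj.comp hinjψ, ?_, ?_⟩, fun w => hmem _⟩
  · intro a b hab
    have h1 := hadjψ a b hab
    rw [SimpleGraph.top_adj] at h1
    show G.graph.Adj (ι (ψ a)) (ι (ψ b))
    rw [hG, SimpleGraph.top_adj]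
    exact fun h => h1 (hinj h)
  · intro a b c d hab hcd hlt
    have h1 := hordψ a b c d hab hcd hlt
    change G.label (Sym2.map ι s(ψ a, ψ b)) < G.label (Sym2.map ι s(ψ c, ψ d)) at h1
    rw [Sym2.map_pair_eq, Sym2.map_pair_eq] at h1
    exact h1

/-- **Adding a small pendant edge preserves Turánability.** If `F` is Turánable, `v` is
incident to the smallest edge `vu` of `F`, and `F'` is obtained from `F` by adding a new
vertex (`none`) joined to `v` by an edge smaller than all edges of `F`, then `F'` is
Turánable. -/
theorem add_pendant_edge_turanable {W : Type} [Fintype W] (F : EdgeOrderedGraph W)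
    (v u : W) (hvu : F.graph.Adj v u)
    (hsmallest : ∀ e ∈ F.graph.edgeSet, F.label s(v, u) ≤ F.label e)
    (hTur : Turanable F)
    (F' : EdgeOrderedGraph (Option W))
    (hadj : ∀ a b : W, F'.graph.Adj (some a) (some b) ↔ F.graph.Adj a b)
    (hpend : ∀ w : W, F'.graph.Adj none (some w) ↔ w = v)
    (horder : ∀ a b c d : W, F.graph.Adj a b → F.graph.Adj c d →
      (F'.label s(some a, some b) < F'.label s(some c, some d) ↔
        F.label s(a, b) < F.label s(c, d)))
    (hnew : ∀ a b : W, F.graph.Adj a b →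
      F'.label s(none, some v) < F'.label s(some a, some b)) :
    Turanable F' := by
  classical
  obtain ⟨t, htur⟩ := hTur
  set cW := Fintype.card W with hcW
  refine ⟨t + t * cW, ?_⟩
  intro G hG
  by_contra hcon
  have hvu' : v ≠ u := hvu.ne
  -- Protection: if no copy of F' exists, then for every copy of F and every vertex outside it,
  -- the connecting edge to the image of v is larger than the minimum edge of the copy.
  have Hprot : ∀ ψ : W → Fin (t + t * cW), IsCopy F G ψ → ∀ x, x ∉ Set.range ψ →
      G.label s(ψ v, ψ u) < G.label s(x, ψ v) := by
    intro ψ hψ x hx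
    have hne1 : x ≠ ψ v := fun h => hx ⟨v, h.symm⟩
    have hne2 : x ≠ ψ u := fun h => hx ⟨u, h.symm⟩
    have hvuψ : ψ v ≠ ψ u := fun h => hvu' (hψ.1 h)
    have e1 : s(x, ψ v) ∈ G.graph.edgeSet := by
      rw [SimpleGraph.mem_edgeSet, hG, SimpleGraph.top_adj]; exact hne1
    have e2 : s(ψ v, ψ u) ∈ G.graph.edgeSet := by
      rw [SimpleGraph.mem_edgeSet, hG, SimpleGraph.top_adj]; exact hvuψ
    rcases lt_trichotomy (G.label s(ψ v, ψ u)) (G.label s(x, ψ v)) with h | h | h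
    · exact h
    · exfalso
      have h3 := G.inj _ e2 _ e1 h
      rw [Sym2.eq_iff] at h3
      rcases h3 with ⟨h1, _⟩ | ⟨_, h2⟩
      · exact hne1 h1.symm
      · exact hne2 h2.symm
    · -- build a copy of F'
      exfalso
      apply hcon
      have hkey : ∀ c' d' : W, F.graph.Adj c' d' →
          G.label s(x, ψ v) < G.label s(ψ c', ψ d') := by
        intro c' d' hcd'
        have h2 : F.label s(v, u) ≤ F.label s(c', d') :=
          hsmallest _ (by rw [SimpleGraph.mem_edgeSet]; exact hcd')
        rcases eq_or_lt_of_le h2 with he | hl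
        · have h3 := F.inj _ (by rw [SimpleGraph.mem_edgeSet]; exact hvu)
            _ (by rw [SimpleGraph.mem_edgeSet]; exact hcd') he
          rw [Sym2.eq_iff] at h3
          rcases h3 with ⟨h1, h2'⟩ | ⟨h1, h2'⟩
          · subst h1; subst h2'; exact h
          · subst h1; subst h2'
            have hsw : (s(ψ u, ψ v) : Sym2 (Fin (t + t * cW))) = s(ψ v, ψ u) := Sym2.eq_swap
            rw [hsw]; exact h
        · exact h.trans (hψ.2.2 v u c' d' hvu hcd' hl)
      have shape : ∀ a b : Option W, F'.graph.Adj a b →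
          (a = none ∧ b = some v) ∨ (a = some v ∧ b = none) ∨
          ∃ a' b', a = some a' ∧ b = some b' ∧ F.graph.Adj a' b' := by
        intro a b hab
        match a, b with
        | none, none => exact (F'.graph.loopless.irrefl none hab).elim
        | none, some w => exact Or.inl ⟨rfl, by rw [(hpend w).mp hab]⟩
        | some w, none => exact Or.inr (Or.inl ⟨by rw [(hpend w).mp hab.symm], rfl⟩)
        | some w, some w' => exact Or.inr (Or.inr ⟨w, w', rfl, rfl, (hadj w w').mp hab⟩)
      refine ⟨fun o => o.elim x ψ, ?_, ?_, ?_⟩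
      · intro a b hab
        match a, b with
        | none, none => rfl
        | none, some w => exact (hx ⟨w, hab.symm⟩).elim
        | some w, none => exact (hx ⟨w, hab⟩).elim
        | some w, some w' => exact congrArg some (hψ.1 hab)
      · intro a b hab
        match a, b with
        | none, none => exact (F'.graph.loopless.irrefl none hab).elim
        | none, some w =>
          have hwv : w = v := (hpend w).mp hab
          subst hwv
          show G.graph.Adj x (ψ w)
          rw [hG, SimpleGraph.top_adj]; exact hne1
        | some w, none =>
          have hwv : w = v := (hpend w).mp hab.symm
          subst hwv
          show G.graph.Adj (ψ w) x
          rw [hG, SimpleGraph.top_adj]; exact hne1.symm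
        | some w, some w' => exact hψ.2.1 w w' ((hadj w w').mp hab)
      · intro a b c d hab hcd hlt
        have swap1 : (s(some v, none) : Sym2 (Option W)) = s(none, some v) := Sym2.eq_swap
        rcases shape a b hab with ⟨ha, hb⟩ | ⟨ha, hb⟩ | ⟨a', b', ha, hb, hab'⟩ <;>
          rcases shape c d hcd with ⟨hc, hd⟩ | ⟨hc, hd⟩ | ⟨c', d', hc, hd, hcd'⟩ <;>
          subst ha <;> subst hb <;> subst hc <;> subst hd
        · exact absurd hlt (lt_irrefl _)
        · rw [swap1] at hlt; exact absurd hlt (lt_irrefl _)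
        · exact hkey c' d' hcd'
        · rw [swap1] at hlt; exact absurd hlt (lt_irrefl _)
        · rw [swap1] at hlt; exact absurd hlt (lt_irrefl _)
        · show G.label s(ψ v, x) < G.label s(ψ c', ψ d')
          have hsw : (s(ψ v, x) : Sym2 (Fin (t + t * cW))) = s(x, ψ v) := Sym2.eq_swap
          rw [hsw]; exact hkey c' d' hcd'
        · exact absurd hlt (lt_asymm (hnew a' b' hab'))
        · rw [swap1] at hlt; exact absurd hlt (lt_asymm (hnew a' b' hab'))
        · exact hψ.2.2 a' b' c' d' hab' hcd' ((horder a' b' c' d' hab' hcd').mp hlt)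
  -- Choice of a maximal copy within any sufficiently large subset.
  have hpick_ex : ∀ Sf : Finset (Fin (t + t * cW)), ∃ φ : W → Fin (t + t * cW), t ≤ Sf.card →
      IsCopy F G φ ∧ (∀ w, φ w ∈ Sf) ∧
      ∀ ψ : W → Fin (t + t * cW), IsCopy F G ψ → (∀ w, ψ w ∈ Sf) →
        G.label s(ψ v, ψ u) ≤ G.label s(φ v, φ u) := by
    intro Sf
    by_cases hc : t ≤ Sf.card
    · obtain ⟨φ₀, hφ₀, hr₀⟩ := exists_copy_in_subset F htur G hG Sf hc
      obtain ⟨φm, hm1, hm2⟩ := Set.Finite.exists_maximalFor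
        (fun ψ : W → Fin (t + t * cW) => G.label s(ψ v, ψ u))
        {ψ | IsCopy F G ψ ∧ ∀ w, ψ w ∈ Sf} (Set.toFinite _) ⟨φ₀, hφ₀, hr₀⟩
      refine ⟨φm, fun _ => ⟨hm1.1, hm1.2, ?_⟩⟩
      intro ψ hψ hr
      by_contra hlt
      push_neg at hlt
      exact absurd (hm2 ⟨hψ, hr⟩ hlt.le) (not_le_of_gt hlt)
    · push_neg at hc
      have ht0 : 0 < t + t * cW := by
        have h1 : 0 < t := lt_of_le_of_lt (Nat.zero_le _) hc
        omega
      exact ⟨fun _ => ⟨0, ht0⟩, fun h => absurd h (by omega)⟩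
  choose pick hpick using hpick_ex
  -- the recursively defined sequence of sets and copies
  let state : ℕ → Finset (Fin (t + t * cW)) × Finset (Fin (t + t * cW)) := fun n =>
    Nat.rec (motive := fun _ => Finset (Fin (t + t * cW)) × Finset (Fin (t + t * cW)))
      (Finset.univ, (∅ : Finset (Fin (t + t * cW))))
      (fun _ p => (((p.1 \ Finset.image (pick p.1) Finset.univ) ∪ p.2) ∪ {pick p.1 v},
        p.2 ∪ {pick p.1 v})) n
  let SS : ℕ → Finset (Fin (t + t * cW)) := fun n => (state n).1
  let AA : ℕ → Finset (Fin (t + t * cW)) := fun n => (state n).2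
  let ph : ℕ → W → Fin (t + t * cW) := fun n => pick (SS n)
  let vv : ℕ → Fin (t + t * cW) := fun n => ph n v
  have hS0 : SS 0 = Finset.univ := rfl
  have hA0 : AA 0 = ∅ := rfl
  have hSsucc : ∀ n, SS (n + 1) =
      ((SS n \ Finset.image (ph n) Finset.univ) ∪ AA n) ∪ {vv n} := fun n => rfl
  have hAsucc : ∀ n, AA (n + 1) = AA n ∪ {vv n} := fun n => rfl
  have himg : ∀ n, (Finset.image (ph n) Finset.univ).card ≤ cW := by
    intro n
    refine le_trans Finset.card_image_le ?_
    rw [Finset.card_univ]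
  have hcard : ∀ n, t + t * cW ≤ (SS n).card + n * cW := by
    intro n
    induction n with
    | zero => simp [hS0, Finset.card_univ]
    | succ n IH =>
      have h1 : (SS n).card ≤ (SS n \ Finset.image (ph n) Finset.univ).card +
          (Finset.image (ph n) Finset.univ).card := Finset.card_le_card_sdiff_add_card
      have h4 : (SS n \ Finset.image (ph n) Finset.univ).card ≤ (SS (n + 1)).card := by
        apply Finset.card_le_card
        rw [hSsucc]
        intro x hx
        exact Finset.mem_union_left _ (Finset.mem_union_left _ hx)
      have h3 := himg n
      have hmul : (n + 1) * cW = n * cW + cW := Nat.succ_mul n cW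
      omega
  have hSt : ∀ n, n ≤ t → t ≤ (SS n).card := by
    intro n hn
    have h1 := hcard n
    have h2 : n * cW ≤ t * cW := Nat.mul_le_mul_right _ hn
    omega
  have hcopy : ∀ n, n ≤ t → IsCopy F G (ph n) := fun n hn => (hpick _ (hSt n hn)).1
  have hrange : ∀ n, n ≤ t → ∀ w, ph n w ∈ SS n := fun n hn => (hpick _ (hSt n hn)).2.1
  have hmax : ∀ n, n ≤ t → ∀ ψ, IsCopy F G ψ → (∀ w, ψ w ∈ SS n) →
      G.label s(ψ v, ψ u) ≤ G.label s(ph n v, ph n u) := fun n hn => (hpick _ (hSt n hn)).2.2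
  have hAS : ∀ n, AA n ⊆ SS n := by
    intro n
    cases n with
    | zero => rw [hA0]; exact Finset.empty_subset _
    | succ n =>
      rw [hAsucc, hSsucc]
      exact Finset.union_subset_union_left Finset.subset_union_right
  have hmono1 : ∀ n, n ≤ t → SS (n + 1) ⊆ SS n := by
    intro n hn
    rw [hSsucc]
    refine Finset.union_subset (Finset.union_subset ?_ (hAS n)) ?_
    · exact Finset.sdiff_subset
    · simp only [Finset.singleton_subset_iff]
      exact hrange n hn v
  have hmono : ∀ j, j ≤ t → ∀ i, i ≤ j → SS j ⊆ SS i := by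
    intro j
    induction j with
    | zero => intro _ i hi; rw [Nat.le_zero.mp hi]
    | succ n IH =>
      intro hjt i hi
      rcases Nat.eq_or_lt_of_le hi with h | h
      · rw [h]
      · exact (hmono1 n (by omega)).trans (IH (by omega) i (by omega))
  have hAt : ∀ n, AA n = (Finset.range n).image vv := by
    intro n
    induction n with
    | zero => rw [hA0]; simp
    | succ n IH =>
      rw [hAsucc, IH, Finset.range_add_one, Finset.image_insert, Finset.insert_eq]
      exact Finset.union_comm _ _
  have hmemA : ∀ n (x : Fin (t + t * cW)), x ∈ AA n ↔ ∃ j, j < n ∧ vv j = x := by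
    intro n x
    rw [hAt]
    constructor
    · intro hx
      obtain ⟨j, hj, hje⟩ := Finset.mem_image.mp hx
      exact ⟨j, Finset.mem_range.mp hj, hje⟩
    · rintro ⟨j, hj, hje⟩
      exact Finset.mem_image.mpr ⟨j, Finset.mem_range.mpr hj, hje⟩
  have hpush : ∀ l (x : Fin (t + t * cW)), x ∈ SS (l + 1) → x ∈ Set.range (ph l) →
      x ∈ AA l ∨ x = vv l := by
    intro l x hx hr
    rw [hSsucc] at hx
    rcases Finset.mem_union.mp hx with hx | hx
    · rcases Finset.mem_union.mp hx with hx | hx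
      · exfalso
        obtain ⟨w, hw⟩ := hr
        exact (Finset.mem_sdiff.mp hx).2 (Finset.mem_image.mpr ⟨w, Finset.mem_univ w, hw⟩)
      · exact Or.inl hx
    · exact Or.inr (Finset.mem_singleton.mp hx)
  -- the key distinctness / non-membership facts
  have key : ∀ j, j < t →
      (∀ l, l < j → vv j ≠ vv l) ∧ (∀ l, l < j → vv j ∉ Set.range (ph l)) := by
    intro j
    induction j using Nat.strong_induction_on with
    | _ j IH =>
    intro hj
    have hjt : j ≤ t := hj.le
    have hne : ∀ l, l < j → vv j ≠ vv l := by
      intro l hl heq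
      have hSjl : SS j ⊆ SS (l + 1) := hmono j hjt (l + 1) hl
      have hqS : ph j u ∈ SS (l + 1) := hSjl (hrange j hjt u)
      by_cases hqr : ph j u ∈ Set.range (ph l)
      · rcases hpush l (ph j u) hqS hqr with hqA | hqv
        · obtain ⟨m, hm, hqm⟩ := (hmemA l (ph j u)).mp hqA
          have hvlm : vv l ∉ Set.range (ph m) :=
            (IH l hl (lt_of_lt_of_le hl hjt)).2 m hm
          have h1 : G.label s(ph m v, ph m u) < G.label s(vv l, ph m v) :=
            Hprot (ph m) (hcopy m (by omega)) (vv l) hvlm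
          have h2 : G.label s(ph j v, ph j u) ≤ G.label s(ph m v, ph m u) :=
            hmax m (by omega) (ph j) (hcopy j hjt)
              (fun w => hmono j hjt m (by omega) (hrange j hjt w))
          have e1 : (s(ph j v, ph j u) : Sym2 (Fin (t + t * cW))) = s(vv l, ph m v) := by
            rw [show ph j v = vv l from heq, show ph j u = ph m v from hqm.symm]
          rw [e1] at h2
          exact lt_irrefl _ (h2.trans_lt h1)
        · have h5 : ph j u = ph j v := hqv.trans heq.symm
          exact hvu' ((hcopy j hjt).1 h5).symm
      · have h1 : G.label s(ph l v, ph l u) < G.label s(ph j u, ph l v) :=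
          Hprot (ph l) (hcopy l (by omega)) (ph j u) hqr
        have h2 : G.label s(ph j v, ph j u) ≤ G.label s(ph l v, ph l u) :=
          hmax l (by omega) (ph j) (hcopy j hjt)
            (fun w => hmono j hjt l (by omega) (hrange j hjt w))
        have e1 : (s(ph j v, ph j u) : Sym2 (Fin (t + t * cW))) = s(ph j u, ph l v) := by
          rw [show ph j v = ph l v from heq]
          exact Sym2.eq_swap
        rw [e1] at h2
        exact lt_irrefl _ (h2.trans_lt h1)
    have hnr : ∀ l, l < j → vv j ∉ Set.range (ph l) := by
      intro l hl hmem
      have hvjS : vv j ∈ SS (l + 1) := hmono j hjt (l + 1) hl (hrange j hjt v)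
      rcases hpush l (vv j) hvjS hmem with h | h
      · obtain ⟨m, hm, hqm⟩ := (hmemA l (vv j)).mp h
        exact hne m (by omega) hqm.symm
      · exact hne l hl h
    exact ⟨hne, hnr⟩
  -- the final contradiction
  have hinjvv : Set.InjOn vv ↑(Finset.range t) := by
    intro a ha b hb hab
    simp only [Finset.coe_range, Set.mem_Iio] at ha hb
    rcases lt_trichotomy a b with h | h | h
    · exact absurd hab.symm ((key b hb).1 a h)
    · exact h
    · exact absurd hab ((key a ha).1 b h)
  have hcardA : t ≤ (AA t).card := by
    rw [hAt t, Finset.card_image_of_injOn hinjvv, Finset.card_range]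
  obtain ⟨φ, hφ, hφr⟩ := exists_copy_in_subset F htur G hG (AA t) hcardA
  obtain ⟨i, hi, hvi⟩ := (hmemA t (φ v)).mp (hφr v)
  obtain ⟨j, hj, hvj⟩ := (hmemA t (φ u)).mp (hφr u)
  have hij : i ≠ j := by
    intro h
    subst h
    exact hvu' (hφ.1 (hvi.symm.trans hvj))
  have hrangeφ : ∀ n, n ≤ t → ∀ w, φ w ∈ SS n := fun n hn w =>
    hmono t le_rfl n hn (hAS t (hφr w))
  rcases lt_or_gt_of_ne hij with h | h
  · have h1 : G.label s(ph i v, ph i u) < G.label s(vv j, ph i v) :=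
      Hprot (ph i) (hcopy i (by omega)) (vv j) ((key j (by omega)).2 i h)
    have h2 : G.label s(φ v, φ u) ≤ G.label s(ph i v, ph i u) :=
      hmax i (by omega) φ hφ (hrangeφ i (by omega))
    have e1 : (s(φ v, φ u) : Sym2 (Fin (t + t * cW))) = s(vv j, ph i v) := by
      rw [← hvi, ← hvj]
      exact Sym2.eq_swap
    rw [e1] at h2
    exact lt_irrefl _ (h2.trans_lt h1)
  · have h1 : G.label s(ph j v, ph j u) < G.label s(vv i, ph j v) :=
      Hprot (ph j) (hcopy j (by omega)) (vv i) ((key i (by omega)).2 j h)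
    have h2 : G.label s(φ v, φ u) ≤ G.label s(ph j v, ph j u) :=
      hmax j (by omega) φ hφ (hrangeφ j (by omega))
    have e1 : (s(φ v, φ u) : Sym2 (Fin (t + t * cW))) = s(vv i, ph j v) := by
      rw [← hvi, ← hvj]
    rw [e1] at h2
    exact lt_irrefl _ (h2.trans_lt h1)
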